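/- Let ⟨,⟩ be a symmetric bilinear form on a finite-dimensional real vector space W which is not semidefinite, with null cone C and nullspace W^⊥. Then C \ W^⊥ is dense in C. -/
import Mathlib


set_option maxHeartbeats 1000000 in
/-- If a symmetric bilinear form is not semidefinite, then the set of nonsingular points
`C \ W^⊥` of its null cone `C` is dense in `C`. -/
theorem stmt_7 {W : Type*} [NormedAddCommGroup W] [NormedSpace ℝ W] [FiniteDimensional ℝ W]
    (B : W →ₗ[ℝ] W →ₗ[ℝ] ℝ) (hsymm : ∀ x y, B x y = B y x)
    (hpos : ∃ x, 0 < B x x) (hneg : ∃ y, B y y < 0) :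
    {x : W | B x x = 0} ⊆
      closure ({x : W | B x x = 0} \ {x : W | ∀ y, B x y = 0}) := by
  obtain ⟨p, hp⟩ := hpos
  obtain ⟨n, hn⟩ := hneg
  set a := B n n with ha_def
  set b := B p n with hb_def
  set c := B p p with hc_def
  have ha : a < 0 := hn
  have hc : 0 < c := hp
  set S : ℝ := max 1 ((|2*b| + c + 1) / (-a)) with hS_def
  have hS1 : (1:ℝ) ≤ S := le_max_left _ _
  have hS0 : (0:ℝ) < S := lt_of_lt_of_le one_pos hS1
  have hSa : a * S + |2*b| + c < 0 := by
    have h2 : (|2*b| + c + 1) / (-a) ≤ S := le_max_right _ _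
    have := (div_le_iff₀ (by linarith : (0:ℝ) < -a)).mp h2
    nlinarith
  have hfS : a * S^2 + 2*b*S + c < 0 := by
    have hb2 : 2*b*S ≤ |2*b| * S := mul_le_mul_of_nonneg_right (le_abs_self _) hS0.le
    nlinarith [abs_nonneg (2*b)]
  have hcont : Continuous (fun s : ℝ => a * s^2 + 2*b*s + c) := by continuity
  have hmem : (0:ℝ) ∈ Set.Icc (a*S^2+2*b*S+c) (a*0^2+2*b*0+0+c) := by
    constructor
    · linarith
    · simp; linarith
  obtain ⟨s, _, hs⟩ :=
    intermediate_value_Icc' (le_of_lt hS0) hcont.continuousOn (by simpa using hmem)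
  have hs' : a * s^2 + 2*b*s + c = 0 := hs
  -- v = p + s • n is a null vector not in W^⊥
  set v : W := p + s • n with hv_def
  have hnp : B n p = b := (hsymm n p).symm ▸ rfl
  have hvv : B v v = 0 := by
    have : B v v = c + s*b + s*(b + s*a) := by
      simp [hv_def, map_add, map_smul, smul_eq_mul, hnp, ← ha_def, ← hb_def, ← hc_def]
    rw [this]; nlinarith [hs']
  have hvy : ∃ y, B v y ≠ 0 := by
    by_contra h
    push_neg at h
    have h1 : c + s*b = 0 := by
      have := h p
      simpa [hv_def, map_add, map_smul, smul_eq_mul, hnp, ← hb_def, ← hc_def] using this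
    have h2 : b + s*a = 0 := by
      have := h n
      simpa [hv_def, map_add, map_smul, smul_eq_mul, ← ha_def, ← hb_def] using this
    have h3 : s*(b+s*a) = 0 := by rw [h2]; ring
    nlinarith [mul_self_nonneg s]
  obtain ⟨y0, hy0⟩ := hvy
  intro x hx
  by_cases hxp : ∀ y, B x y = 0
  · -- approximate x by x + (1/(k+1)) • v
    have htend : Filter.Tendsto (fun k : ℕ => x + (1/((k:ℝ)+1)) • v)
        Filter.atTop (nhds x) := by
      have h0 : Filter.Tendsto (fun k : ℕ => (1/((k:ℝ)+1)) • v)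
          Filter.atTop (nhds ((0:ℝ) • v)) :=
        tendsto_one_div_add_atTop_nhds_zero_nat.smul_const v
      simpa using tendsto_const_nhds.add h0
    refine mem_closure_of_tendsto htend (Filter.Eventually.of_forall fun k => ?_)
    have htpos : (0:ℝ) < 1/((k:ℝ)+1) := by positivity
    constructor
    · show B _ _ = 0
      simp only [map_add, map_smul, LinearMap.add_apply, LinearMap.smul_apply, smul_eq_mul]
      have hxv : B x v = 0 := hxp v
      have hvx : B v x = 0 := (hsymm v x).trans hxv
      rw [hx, hxv, hvx, hvv]; ring
    · intro hmem
      have := hmem y0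
      have hxy : B x y0 = 0 := hxp y0
      simp only [map_add, map_smul, LinearMap.add_apply, LinearMap.smul_apply,
        smul_eq_mul, hxy, zero_add] at this
      exact hy0 (by
        rcases mul_eq_zero.mp this with h | h
        · exact absurd h (ne_of_gt htpos)
        · exact h)
  · exact subset_closure ⟨hx, hxp⟩
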